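/- Let k ≥ 1, and let m, n be integers with m ≥ n ≥ 1. Write n = kq₀ + n₀ with q₀ ≥ 0 and 1 ≤ n₀ ≤ k. Then Σ_{i=1}^n min{ ⌊(m − j)/k⌋ : i ≤ j ≤ n, j ≡ i (mod k) } = (n(m−n) − {n}_k·{m−n}_k)/k + {m}_k·[{m}_k < {n}_k], where {a}_k is the least nonnegative residue of a mod k and [P] = 1 if P holds, 0 otherwise. -/

import Mathlib

private lemma count_aux (k r : ℕ) (M : ℕ) :
    (∑ t ∈ Finset.range M, (if k ≤ r + t then 1 else 0)) = M - min M (k - r) := by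
  induction M with
  | zero => simp
  | succ M ih =>
    rw [Finset.sum_range_succ, ih]
    by_cases h : k ≤ r + M
    · rw [if_pos h]; omega
    · rw [if_neg h]; omega

private lemma periodic_sum (k : ℕ) (f : ℕ → ℕ) (q c : ℕ) :
    ∑ t ∈ Finset.range (k * q + c), f (t % k)
      = q * ∑ t ∈ Finset.range k, f (t % k) + ∑ t ∈ Finset.range c, f (t % k) := by
  induction q with
  | zero => simp
  | succ q ih =>
    have h1 : k * (q + 1) + c = k + (k * q + c) := by ring
    rw [h1, Finset.sum_range_add]
    have h2 : ∀ i ∈ Finset.range (k * q + c), f ((k + i) % k) = f (i % k) := by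
      intro i _
      rw [Nat.add_mod_left]
    rw [Finset.sum_congr rfl h2, ih]
    ring

private lemma sinf_eq (k m n i : ℕ) (hk : 1 ≤ k) (hi : 1 ≤ i) (hin : i ≤ n) (hnm : n ≤ m) :
    sInf {c : ℕ | ∃ j, i ≤ j ∧ j ≤ n ∧ j % k = i % k ∧ c = (m - j) / k} =
      (m - n + (n - i) % k) / k := by
  obtain ⟨q, p, hqp, hpk, hpeq⟩ :
      ∃ q p, k * q + p = n - i ∧ p < k ∧ (n - i) % k = p :=
    ⟨(n - i) / k, (n - i) % k, Nat.div_add_mod _ _, Nat.mod_lt _ hk, rfl⟩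
  rw [hpeq]
  have hj₀n : i + k * q ≤ n := by omega
  have hj₀mod : (i + k * q) % k = i % k := Nat.add_mul_mod_self_left i k q
  have hval : m - (i + k * q) = m - n + p := by omega
  have hmem : (m - n + p) / k ∈
      {c : ℕ | ∃ j, i ≤ j ∧ j ≤ n ∧ j % k = i % k ∧ c = (m - j) / k} :=
    ⟨i + k * q, Nat.le_add_right _ _, hj₀n, hj₀mod, by rw [hval]⟩
  apply le_antisymm
  · exact Nat.sInf_le hmem
  · apply le_csInf ⟨_, hmem⟩
    rintro b ⟨j, h1, h2, h3, rfl⟩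
    have hdvd : k ∣ j - i := (Nat.modEq_iff_dvd' h1).mp h3.symm
    obtain ⟨t, ht⟩ := hdvd
    have htq : t ≤ q := by
      rcases Nat.lt_or_ge q t with h | h
      · exfalso
        have : k * q + k ≤ k * t := by
          have := Nat.mul_le_mul_left k h
          calc k * q + k = k * (q + 1) := by ring
            _ ≤ k * t := Nat.mul_le_mul_left k h
        omega
      · exact h
    have : k * t ≤ k * q := Nat.mul_le_mul_left k htq
    have hjle : j ≤ i + k * q := by omega
    rw [← hval]
    exact Nat.div_le_div_right (Nat.sub_le_sub_left hjle m)

private lemma block_sum (k m n M : ℕ) (hk : 1 ≤ k) (hM : M ≤ k) :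
    ∑ t ∈ Finset.range M, (m - n + t % k) / k
      = M * ((m - n) / k) + (M - min M (k - (m - n) % k)) := by
  have h1 : ∀ t ∈ Finset.range M, (m - n + t % k) / k
      = (m - n) / k + (if k ≤ (m - n) % k + t then 1 else 0) := by
    intro t ht
    have htk : t < k := lt_of_lt_of_le (Finset.mem_range.mp ht) hM
    rw [Nat.mod_eq_of_lt htk, Nat.add_div hk, Nat.div_eq_of_lt htk,
      Nat.mod_eq_of_lt htk]
    omega
  rw [Finset.sum_congr rfl h1, Finset.sum_add_distrib, Finset.sum_const,
    smul_eq_mul, Finset.card_range, count_aux]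

theorem stmt_11 (k m n q₀ n₀ : ℕ) (hk : 1 ≤ k) (hn : 1 ≤ n) (hmn : n ≤ m)
    (hdecomp : n = k * q₀ + n₀) (hn₀1 : 1 ≤ n₀) (hn₀k : n₀ ≤ k) :
    (∑ i ∈ Finset.Icc 1 n,
        sInf {c : ℕ | ∃ j, i ≤ j ∧ j ≤ n ∧ j % k = i % k ∧ c = (m - j) / k}) =
      (n * (m - n) - (n % k) * ((m - n) % k)) / k
        + (m % k) * (if m % k < n % k then 1 else 0) := by
  have hstep : ∀ i ∈ Finset.Icc 1 n,
      sInf {c : ℕ | ∃ j, i ≤ j ∧ j ≤ n ∧ j % k = i % k ∧ c = (m - j) / k}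
        = (m - n + (n - i) % k) / k := by
    intro i hi
    rw [Finset.mem_Icc] at hi
    exact sinf_eq k m n i hk hi.1 hi.2 hmn
  rw [Finset.sum_congr rfl hstep, ← Finset.Ico_add_one_right_eq_Icc, Finset.sum_Ico_eq_sum_range]
  simp only [Nat.add_sub_cancel]
  have hre : ∀ i ∈ Finset.range n,
      (m - n + (n - (1 + i)) % k) / k
        = (m - n + (n - 1 - i) % k) / k := by
    intro i _
    have : n - (1 + i) = n - 1 - i := by omega
    rw [this]
  rw [Finset.sum_congr rfl hre]
  have hrefl := Finset.sum_range_reflect (fun t => (m - n + t % k) / k) n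
  try simp only at hrefl
  rw [hrefl]
  -- now: ∑ t ∈ range n, (m - n + t % k)/k
  have hfull : ∑ t ∈ Finset.range n, (m - n + t % k) / k
      = q₀ * (∑ t ∈ Finset.range k, (m - n + t % k) / k)
        + ∑ t ∈ Finset.range n₀, (m - n + t % k) / k := by
    have h := periodic_sum k (fun t => (m - n + t) / k) q₀ n₀
    try simp only at h
    rw [← hdecomp] at h
    exact h
  rw [hfull, block_sum k m n k hk le_rfl, block_sum k m n n₀ hk hn₀k]
  set s := (m - n) / k with hs
  set r := (m - n) % k with hrdef
  have hr : r < k := Nat.mod_lt _ hk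
  have hsr : k * s + r = m - n := Nat.div_add_mod _ _
  have hmink : min k (k - r) = k - r := min_eq_right (Nat.sub_le k r)
  rw [hmink]
  have hkr : k - (k - r) = r := by omega
  rw [hkr]
  have hm0 : m = n + (k * s + r) := by omega
  by_cases hcase : n₀ = k
  · rw [hcase]
    have hnmod : n % k = 0 := by
      have h1 : n = k * (q₀ + 1) := by rw [hdecomp, hcase]; ring
      rw [h1, Nat.mul_mod_right]
    have hmmod : m % k = r := by
      have hexp : k * (q₀ + 1 + s) = k * q₀ + k + k * s := by ring
      have hm2 : m = r + k * (q₀ + 1 + s) := by omega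
      rw [hm2, Nat.add_mul_mod_self_left, Nat.mod_eq_of_lt hr]
    rw [hnmod, hmmod]
    rw [if_neg (show ¬ r < 0 by omega), mul_zero, add_zero, zero_mul, Nat.sub_zero]
    rw [hmink, hkr]
    have hnum : n * (m - n) = k * ((q₀ + 1) * (k * s + r)) := by
      have hmn' : m - n = k * s + r := hsr.symm
      rw [hmn', hdecomp, hcase]; ring
    rw [hnum, Nat.mul_div_cancel_left _ (show 0 < k by omega)]
    ring
  · have hn₀lt : n₀ < k := lt_of_le_of_ne hn₀k hcase
    have hnmod : n % k = n₀ := by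
      rw [hdecomp, add_comm, mul_comm, Nat.add_mul_mod_self_right,
        Nat.mod_eq_of_lt hn₀lt]
    have hnum : n * (m - n) = k * (k * q₀ * s + q₀ * r + n₀ * s) + n₀ * r := by
      have hmn' : m - n = k * s + r := hsr.symm
      rw [hmn', hdecomp]; ring
    have hterm1 : (n * (m - n) - n % k * r) / k = k * q₀ * s + q₀ * r + n₀ * s := by
      rw [hnmod, hnum, Nat.add_sub_cancel, Nat.mul_div_cancel_left _ (show 0 < k by omega)]
    rw [hterm1, hnmod]
    by_cases hc : n₀ + r < k
    · have hmmod : m % k = n₀ + r := by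
        have hexp : k * (q₀ + s) = k * q₀ + k * s := by ring
        have hm2 : m = (n₀ + r) + k * (q₀ + s) := by omega
        rw [hm2, Nat.add_mul_mod_self_left, Nat.mod_eq_of_lt hc]
      rw [hmmod]
      rw [if_neg (show ¬ n₀ + r < n₀ by omega), mul_zero, add_zero]
      rw [min_eq_left (show n₀ ≤ k - r by omega), Nat.sub_self, add_zero]
      ring
    · push_neg at hc
      have hmmod : m % k = n₀ + r - k := by
        have hexp : k * (q₀ + s + 1) = k * q₀ + k * s + k := by ring
        have hm2 : m = (n₀ + r - k) + k * (q₀ + s + 1) := by omega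
        rw [hm2, Nat.add_mul_mod_self_left, Nat.mod_eq_of_lt (show n₀ + r - k < k by omega)]
      rw [hmmod]
      rw [if_pos (show n₀ + r - k < n₀ by omega), mul_one]
      rw [min_eq_right (show k - r ≤ n₀ by omega)]
      rw [show n₀ - (k - r) = n₀ + r - k from by omega]
      have hring : q₀ * (k * s + r) + n₀ * s = k * q₀ * s + q₀ * r + n₀ * s := by ring
      omega
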